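/- Let V ∈ L¹(ℝ) and k ∈ ℂ with Im(k) ≥ 0, k ≠ 0. Then the modified Lippmann–Schwinger equation m(x) = 1 + ∫ₓ^∞ D_k(y − x) V(y) m(y) dy with D_k(t) = (e^{2ikt} − 1)/(2ik) has a unique bounded solution m = m₊(k; ·) satisfying |m₊(k;x) − 1| ≤ exp( |k|^{−1} ∫ₓ^∞ |V(y)| dy ) − 1 for all x ∈ ℝ; in particular |m₊(k;x)| ≤ exp(‖V‖₁/|k|). -/

import Mathlib

set_option maxHeartbeats 1000000

open MeasureTheory Set Filter Topology Nat

noncomputable def Dker (k : ℂ) (t : ℝ) : ℂ :=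
  ∫ s in (0:ℝ)..t, Complex.exp (2 * Complex.I * k * s)

lemma dker_eq (k : ℂ) (hk0 : k ≠ 0) (t : ℝ) :
    Dker k t = (Complex.exp (2 * Complex.I * k * t) - 1) / (2 * Complex.I * k) := by
  have hc : (2 * Complex.I * k) ≠ 0 := by
    simp [Complex.I_ne_zero, hk0]
  have := integral_exp_mul_complex (a := 0) (b := t) hc
  simpa [Dker] using this

lemma dker_cont (k : ℂ) (hk0 : k ≠ 0) : Continuous (Dker k) := by
  have : Dker k = fun t : ℝ => (Complex.exp (2 * Complex.I * k * t) - 1) / (2 * Complex.I * k) :=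
    funext (dker_eq k hk0)
  rw [this]
  fun_prop

lemma dker_norm (k : ℂ) (hk : 0 ≤ k.im) (hk0 : k ≠ 0) {t : ℝ} (ht : 0 ≤ t) :
    ‖Dker k t‖ ≤ ‖k‖⁻¹ := by
  have hknorm : (0:ℝ) < ‖k‖ := norm_pos_iff.2 hk0
  rw [dker_eq k hk0, norm_div]
  have h1 : ‖Complex.exp (2 * Complex.I * k * t) - 1‖ ≤ 2 := by
    refine (norm_sub_le _ _).trans ?_
    have he : ‖Complex.exp (2 * Complex.I * k * t)‖ ≤ 1 := by
      rw [Complex.norm_exp]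
      have : (2 * Complex.I * k * t).re = -(2 * t * k.im) := by
        simp [Complex.mul_re, Complex.mul_im]; ring
      rw [this]
      exact Real.exp_le_one_iff.2 (by nlinarith)
    calc ‖Complex.exp (2 * Complex.I * k * t)‖ + ‖(1:ℂ)‖ ≤ 1 + 1 := by
          simpa using he
    _ = 2 := by norm_num
  have h2 : ‖2 * Complex.I * k‖ = 2 * ‖k‖ := by
    simp [norm_mul]
  rw [h2, div_le_iff₀ (by positivity)]
  calc ‖Complex.exp (2 * Complex.I * k * t) - 1‖ ≤ 2 := h1
  _ = ‖k‖⁻¹ * (2 * ‖k‖) := by field_simp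


lemma tail_nonneg {g : ℝ → ℝ} (hg0 : ∀ y, 0 ≤ g y) (x : ℝ) : 0 ≤ ∫ y in Ioi x, g y :=
  integral_nonneg fun y => hg0 y

lemma tail_anti {g : ℝ → ℝ} (hg : Integrable g) (hg0 : ∀ y, 0 ≤ g y) :
    Antitone (fun x => ∫ y in Ioi x, g y) := by
  intro a b hab
  exact setIntegral_mono_set hg.integrableOn
    (Eventually.of_forall fun y => hg0 y)
    (HasSubset.Subset.eventuallyLE (Ioi_subset_Ioi hab))

lemma tail_le {g : ℝ → ℝ} (hg : Integrable g) (hg0 : ∀ y, 0 ≤ g y) (x : ℝ) :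
    ∫ y in Ioi x, g y ≤ ∫ y, g y :=
  setIntegral_le_integral hg (Eventually.of_forall fun y => hg0 y)

lemma tail_cont {g : ℝ → ℝ} (hg : Integrable g) :
    Continuous (fun x => ∫ y in Ioi x, g y) := by
  have h1 : ∀ x : ℝ, ∫ y in Ioi x, g y = (∫ y, g y) - ∫ y in Iic x, g y := by
    intro x
    rw [← intervalIntegral.integral_Iic_add_Ioi (f := g) hg.integrableOn hg.integrableOn]
    ring
  have h2 : ∀ x : ℝ, ∫ y in Iic x, g y = (∫ y in Iic 0, g y) + ∫ y in (0:ℝ)..x, g y := by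
    intro x
    rw [← intervalIntegral.integral_Iic_sub_Iic hg.integrableOn hg.integrableOn]
    ring
  have h3 : (fun x => ∫ y in Ioi x, g y)
      = fun x => (∫ y, g y) - ((∫ y in Iic 0, g y) + ∫ y in (0:ℝ)..x, g y) := by
    funext x; rw [h1 x, h2 x]
  rw [h3]
  exact continuous_const.sub (continuous_const.add (intervalIntegral.continuous_primitive
    (fun a b => hg.intervalIntegrable) 0))

lemma tail_tendsto {g : ℝ → ℝ} (hg : Integrable g) (hg0 : ∀ y, 0 ≤ g y) :
    Tendsto (fun x => ∫ y in Ioi x, g y) atTop (𝓝 0) := by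
  have h : Tendsto (fun x : ℝ => ∫ y, (Ioi x).indicator g y) atTop (𝓝 (∫ y : ℝ, (0:ℝ))) := by
    refine tendsto_integral_filter_of_dominated_convergence g ?_ ?_ hg ?_
    · exact Eventually.of_forall fun x =>
        (hg.aestronglyMeasurable.indicator measurableSet_Ioi)
    · refine Eventually.of_forall fun x => Eventually.of_forall fun y => ?_
      rw [Real.norm_eq_abs, abs_of_nonneg (indicator_nonneg (fun z _ => hg0 z) y)]
      exact indicator_le_self' (fun z _ => hg0 z) y
    · refine Eventually.of_forall fun y => ?_
      have h0 : ∀ᶠ x in atTop, (Ioi x).indicator g y = 0 := by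
        filter_upwards [eventually_ge_atTop y] with x hx
        simp [indicator_apply, not_lt.2 hx]
      exact Tendsto.congr' (h0.mono fun x hx => hx.symm) tendsto_const_nhds
  simp only [integral_zero] at h
  refine h.congr fun x => ?_
  rw [integral_indicator measurableSet_Ioi]


lemma tail_level {g : ℝ → ℝ} (hg : Integrable g) (hg0 : ∀ y, 0 ≤ g y) {x t : ℝ}
    (ht0 : 0 < t) (htH : t < ∫ y in Ioi x, g y) :
    ∫ y in Ioi x ∩ {y | t < ∫ z in Ioi y, g z}, g y ≤ (∫ y in Ioi x, g y) - t := by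
  set h : ℝ → ℝ := fun y => ∫ z in Ioi y, g z with hh
  set S : Set ℝ := {y | t < h y} with hS
  have hxS : x ∈ S := htH
  have hSne : S.Nonempty := ⟨x, hxS⟩
  obtain ⟨b, hb⟩ : ∃ b, h b < t := ((tail_tendsto hg hg0).eventually_lt_const ht0).exists
  have hbdd : BddAbove S := by
    refine ⟨b, fun y hy => ?_⟩
    by_contra hyb
    push_neg at hyb
    exact absurd (tail_anti hg hg0 hyb.le) (not_le.2 (lt_trans hb hy))
  set c : ℝ := sSup S with hc
  have hxc : x ≤ c := le_csSup hbdd hxS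
  have hct : t ≤ h c := by
    by_contra hlt
    push_neg at hlt
    have hopen : IsOpen {y | h y < t} := isOpen_lt (tail_cont hg) continuous_const
    obtain ⟨δ, hδ0, hball⟩ := Metric.isOpen_iff.1 hopen c hlt
    have hub : ∀ y ∈ S, y ≤ c - δ/2 := by
      intro y hy
      by_contra hyc
      push_neg at hyc
      have h1 : h y ≤ h (c - δ/2) := tail_anti hg hg0 hyc.le
      have h2 : (c - δ/2) ∈ Metric.ball c δ := by
        simp only [Metric.mem_ball, Real.dist_eq]
        rw [abs_lt]
        constructor <;> linarith
      exact absurd (lt_of_lt_of_le hy (h1.trans (hball h2).le)) (lt_irrefl t)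
    have := csSup_le hSne hub
    linarith
  have hsub : Ioi x ∩ S ⊆ Ioc x c := fun y hy => ⟨hy.1, le_csSup hbdd hy.2⟩
  have h1 : ∫ y in Ioi x ∩ S, g y ≤ ∫ y in Ioc x c, g y :=
    setIntegral_mono_set hg.integrableOn
      (Eventually.of_forall fun y => hg0 y)
      (HasSubset.Subset.eventuallyLE hsub)
  have h2 : (∫ y in Ioc x c, g y) + ∫ y in Ioi c, g y = ∫ y in Ioi x, g y := by
    rw [← setIntegral_union (Ioc_disjoint_Ioi le_rfl) measurableSet_Ioi
      hg.integrableOn hg.integrableOn, Ioc_union_Ioi_eq_Ioi hxc]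
  have h3 : t ≤ ∫ y in Ioi c, g y := hct
  linarith


lemma pow_int_Ioo {a H : ℝ} (ha : 0 ≤ a) (haH : a ≤ H) (m : ℕ) :
    ∫ t in Ioo (0:ℝ) H, (if t < a then ((m:ℝ)+1) * t^m else 0) = a^(m+1) := by
  have h1 : (fun t : ℝ => if t < a then ((m:ℝ)+1) * t^m else 0)
      = (Iio a).indicator (fun t => ((m:ℝ)+1) * t^m) := by
    funext t; simp [indicator_apply]
  rw [h1, setIntegral_indicator measurableSet_Iio]
  have h2 : Ioo (0:ℝ) H ∩ Iio a = Ioo 0 a := by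
    ext t
    simp only [mem_inter_iff, mem_Ioo, mem_Iio]
    constructor
    · rintro ⟨⟨h1', _⟩, h3'⟩; exact ⟨h1', h3'⟩
    · rintro ⟨h1', h2'⟩; exact ⟨⟨h1', lt_of_lt_of_le h2' haH⟩, h2'⟩
  rw [h2, ← integral_Ioc_eq_integral_Ioo, ← intervalIntegral.integral_of_le ha]
  rw [intervalIntegral.integral_const_mul, integral_pow]
  have : (m:ℝ) + 1 ≠ 0 := by positivity
  field_simp
  simp

lemma tail_key {g : ℝ → ℝ} (hg : Integrable g) (hg0 : ∀ y, 0 ≤ g y) (hgm : Measurable g)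
    (n : ℕ) (x : ℝ) :
    ∫ y in Ioi x, g y * (∫ z in Ioi y, g z) ^ n
      ≤ (∫ y in Ioi x, g y) ^ (n + 1) / ((n:ℝ) + 1) := by
  obtain _ | m := n
  · simp
  set h : ℝ → ℝ := fun y => ∫ z in Ioi y, g z with hh
  set H : ℝ := ∫ y in Ioi x, g y with hH
  have hH0 : 0 ≤ H := tail_nonneg hg0 x
  set f : ℝ → ℝ → ℝ := fun y t => if t < h y then g y * (((m:ℝ)+1) * t^m) else 0 with hf
  haveI : IsFiniteMeasure (volume.restrict (Ioo (0:ℝ) H)) := by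
    constructor
    rw [Measure.restrict_apply_univ]
    simp [Real.volume_Ioo]
  -- integrability of uncurried f
  have hmeas : Measurable (Function.uncurry f) := by
    have hset : MeasurableSet {p : ℝ × ℝ | p.2 < h p.1} :=
      measurableSet_lt measurable_snd ((tail_cont hg).measurable.comp measurable_fst)
    exact Measurable.ite hset
      ((hgm.comp measurable_fst).mul ((measurable_snd.pow_const m).const_mul _))
      measurable_const
  have hfint : Integrable (Function.uncurry f)
      ((volume.restrict (Ioi x)).prod (volume.restrict (Ioo 0 H))) := by
    have hbound : Integrable (fun p : ℝ × ℝ => g p.1 * (((m:ℝ)+1) * H^m))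
        ((volume.restrict (Ioi x)).prod (volume.restrict (Ioo 0 H))) := by
      exact (hg.integrableOn.mul_prod (integrable_const _)).congr (by
        refine Eventually.of_forall fun p => rfl)
    refine hbound.mono' hmeas.aestronglyMeasurable ?_
    rw [Measure.prod_restrict]
    refine (ae_restrict_iff' (measurableSet_Ioi.prod measurableSet_Ioo)).2 ?_
    refine Eventually.of_forall fun p hp => ?_
    obtain ⟨hp1, hp2⟩ := hp
    simp only [Function.uncurry, hf, Real.norm_eq_abs]
    have hgp := hg0 p.1
    rcases lt_or_ge p.2 (h p.1) with hlt | hle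
    · rw [if_pos hlt]
      have ht0 : (0:ℝ) < p.2 := hp2.1
      have htH : p.2 ≤ H := hp2.2.le
      rw [abs_of_nonneg (by positivity)]
      have h2 : p.2 ^ m ≤ H ^ m := pow_le_pow_left₀ ht0.le htH m
      have hm1 : (0:ℝ) ≤ (m:ℝ) + 1 := by positivity
      exact mul_le_mul_of_nonneg_left (mul_le_mul_of_nonneg_left h2 hm1) hgp
    · rw [if_neg (not_lt.2 hle)]
      simp only [abs_zero]
      positivity
  have hinner : ∀ y ∈ Ioi x, g y * h y ^ (m+1) = ∫ t in Ioo (0:ℝ) H, f y t := by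
    intro y hy
    have hhy0 : 0 ≤ h y := tail_nonneg hg0 y
    have hhyH : h y ≤ H := tail_anti hg hg0 (le_of_lt hy)
    have e1 : (fun t => f y t)
        = fun t => g y * (if t < h y then ((m:ℝ)+1) * t^m else 0) := by
      funext t
      simp only [hf]
      split <;> ring
    rw [e1, integral_const_mul, pow_int_Ioo hhy0 hhyH m]
  have step1 : ∫ y in Ioi x, g y * h y ^ (m+1) = ∫ y in Ioi x, ∫ t in Ioo (0:ℝ) H, f y t :=
    setIntegral_congr_fun measurableSet_Ioi fun y hy => hinner y hy
  have step2 : ∫ y in Ioi x, ∫ t in Ioo (0:ℝ) H, f y t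
      = ∫ t in Ioo (0:ℝ) H, ∫ y in Ioi x, f y t := integral_integral_swap hfint
  have hrhs_int : IntegrableOn (fun t : ℝ => ((m:ℝ)+1) * t^m * (H - t)) (Ioo 0 H) := by
    have : Continuous (fun t : ℝ => ((m:ℝ)+1) * t^m * (H - t)) := by fun_prop
    exact (this.integrableOn_Ioc).mono_set Ioo_subset_Ioc_self
  have step3 : ∫ t in Ioo (0:ℝ) H, ∫ y in Ioi x, f y t
      ≤ ∫ t in Ioo (0:ℝ) H, (((m:ℝ)+1) * t^m * (H - t)) := by
    refine setIntegral_mono_on hfint.integral_prod_right hrhs_int measurableSet_Ioo ?_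
    intro t ht
    have ht0 : 0 < t := ht.1
    have htH : t < H := ht.2
    have hSt : MeasurableSet {y | t < h y} :=
      measurableSet_lt measurable_const (tail_cont hg).measurable
    have e1 : (fun y => f y t)
        = fun y => ({y | t < h y}).indicator (fun y => g y * (((m:ℝ)+1) * t^m)) y := by
      funext y
      simp only [hf, indicator_apply, mem_setOf_eq]
    calc ∫ y in Ioi x, f y t
        = ∫ y in Ioi x, ({y | t < h y}).indicator (fun y => g y * (((m:ℝ)+1) * t^m)) y := by
          rw [e1]
      _ = ∫ y in Ioi x ∩ {y | t < h y}, g y * (((m:ℝ)+1) * t^m) :=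
          setIntegral_indicator hSt
      _ = (∫ y in Ioi x ∩ {y | t < h y}, g y) * (((m:ℝ)+1) * t^m) := by
          rw [integral_mul_const]
      _ ≤ (H - t) * (((m:ℝ)+1) * t^m) := by
          refine mul_le_mul_of_nonneg_right (tail_level hg hg0 ht0 htH) (by positivity)
      _ = ((m:ℝ)+1) * t^m * (H - t) := by ring
  have hfin : ∫ t in Ioo (0:ℝ) H, (((m:ℝ)+1) * t^m * (H - t)) = H^(m+2)/((m:ℝ)+2) := by
    rw [← integral_Ioc_eq_integral_Ioo, ← intervalIntegral.integral_of_le hH0]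
    have e2 : (fun t : ℝ => ((m:ℝ)+1) * t^m * (H - t))
        = fun t : ℝ => (((m:ℝ)+1)*H) * t^m - ((m:ℝ)+1) * t^(m+1) := by
      funext t; ring
    rw [e2, intervalIntegral.integral_sub ((intervalIntegral.intervalIntegrable_pow m).const_mul _)
      ((intervalIntegral.intervalIntegrable_pow (m+1)).const_mul _),
      intervalIntegral.integral_const_mul, intervalIntegral.integral_const_mul,
      integral_pow, integral_pow]
    have h1 : (m:ℝ)+1 ≠ 0 := by positivity
    have h2 : (m:ℝ)+2 ≠ 0 := by positivity
    push_cast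
    field_simp
    ring
  have hcast : ((m:ℝ)+2) = ((m+1:ℕ):ℝ) + 1 := by push_cast; ring
  calc ∫ y in Ioi x, g y * h y ^ (m+1) = ∫ t in Ioo (0:ℝ) H, ∫ y in Ioi x, f y t := by
        rw [step1, step2]
    _ ≤ H^(m+2)/((m:ℝ)+2) := by rw [← hfin]; exact step3
    _ = H ^ (m+1+1) / (((m+1:ℕ):ℝ) + 1) := by rw [hcast]




lemma real_exp_tsum (x : ℝ) : Real.exp x = ∑' n : ℕ, x ^ n / n ! := by
  rw [Real.exp_eq_exp_ℝ, NormedSpace.exp_eq_tsum_div]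

lemma main_aux (k : ℂ) (hk : 0 ≤ k.im) (hk0 : k ≠ 0) (W : ℝ → ℂ)
    (hWi : Integrable W) (hWm : Measurable W) :
    ∃ m : ℝ → ℂ, Measurable m ∧ (∃ C, ∀ x, ‖m x‖ ≤ C) ∧
      (∀ x, m x = 1 + ∫ y in Set.Ioi x, Dker k (y - x) * W y * m y) ∧
      (∀ m' : ℝ → ℂ, Measurable m' → (∃ C, ∀ x, ‖m' x‖ ≤ C) →
        (∀ x, m' x = 1 + ∫ y in Set.Ioi x, Dker k (y - x) * W y * m' y) → m' = m) ∧
      (∀ x, ‖m x - 1‖ ≤ Real.exp (‖k‖⁻¹ * ∫ y in Set.Ioi x, ‖W y‖) - 1) ∧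
      (∀ x, ‖m x‖ ≤ Real.exp ((∫ y, ‖W y‖) / ‖k‖)) := by
  have hknorm : (0:ℝ) < ‖k‖ := norm_pos_iff.2 hk0
  set g : ℝ → ℝ := fun y => ‖k‖⁻¹ * ‖W y‖ with hgdef
  have hg : Integrable g := hWi.norm.const_mul _
  have hg0 : ∀ y, 0 ≤ g y := fun y => by positivity
  have hgm : Measurable g := (hWm.norm).const_mul _
  set hfun : ℝ → ℝ := fun x => ∫ y in Ioi x, g y with hhdef
  set A : ℝ := ∫ y, g y with hAdef
  have hh0 : ∀ x, 0 ≤ hfun x := fun x => tail_nonneg hg0 x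
  have hhA : ∀ x, hfun x ≤ A := fun x => tail_le hg hg0 x
  have hA0 : 0 ≤ A := le_trans (hh0 0) (hhA 0)
  -- the key one-step estimate
  have step : ∀ (v : ℝ → ℂ), Measurable v → ∀ (c : ℝ), 0 ≤ c → ∀ n : ℕ,
      (∀ y, ‖v y‖ ≤ c * hfun y ^ n / n !) → ∀ x,
      IntegrableOn (fun y => Dker k (y - x) * W y * v y) (Ioi x) ∧
      (∫ y in Ioi x, ‖Dker k (y - x) * W y * v y‖) ≤ c * hfun x ^ (n+1) / (n+1)! := by
    intro v hv c hc n hvb x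
    have hfac : (0:ℝ) < n ! := by exact_mod_cast Nat.factorial_pos n
    have hmeas : Measurable (fun y => Dker k (y - x) * W y * v y) :=
      (((dker_cont k hk0).measurable.comp (measurable_id.sub_const x)).mul hWm).mul hv
    have hptw : ∀ y ∈ Ioi x, ‖Dker k (y - x) * W y * v y‖ ≤ g y * (c * hfun y ^ n / n !) := by
      intro y hy
      have hyx : (0:ℝ) ≤ y - x := by simp only [mem_Ioi] at hy; linarith
      have h1 : ‖Dker k (y - x) * W y * v y‖ = ‖Dker k (y-x)‖ * ‖W y‖ * ‖v y‖ := by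
        rw [norm_mul, norm_mul]
      rw [h1]
      have h2 : ‖Dker k (y-x)‖ * ‖W y‖ ≤ ‖k‖⁻¹ * ‖W y‖ :=
        mul_le_mul_of_nonneg_right (dker_norm k hk hk0 hyx) (norm_nonneg _)
      calc ‖Dker k (y-x)‖ * ‖W y‖ * ‖v y‖ ≤ (‖k‖⁻¹ * ‖W y‖) * (c * hfun y ^ n / n !) := by
            refine mul_le_mul h2 (hvb y) (norm_nonneg _) (by positivity)
        _ = g y * (c * hfun y ^ n / n !) := rfl
    have hub : ∀ y, g y * (c * hfun y ^ n / n !) ≤ g y * (c * A ^ n / n !) := by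
      intro y
      have : hfun y ^ n ≤ A ^ n := pow_le_pow_left₀ (hh0 y) (hhA y) n
      have hgy := hg0 y
      gcongr
    have hmaj : IntegrableOn (fun y => g y * (c * hfun y ^ n / n !)) (Ioi x) := by
      have hm1 : Measurable fun y => g y * (c * hfun y ^ n / n !) := by
        have : Measurable hfun := (tail_cont hg).measurable
        fun_prop
      refine (hg.integrableOn.mul_const (c * A ^ n / n !)).mono'
        hm1.aestronglyMeasurable ?_
      refine Eventually.of_forall fun y => ?_
      have h1 : (0:ℝ) ≤ g y * (c * hfun y ^ n / n !) := by
        have := hg0 y; have := hh0 y; positivity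
      rw [Real.norm_eq_abs, abs_of_nonneg h1]
      exact hub y
    have hint : IntegrableOn (fun y => Dker k (y - x) * W y * v y) (Ioi x) := by
      refine hmaj.mono' hmeas.aestronglyMeasurable ?_
      exact (ae_restrict_iff' measurableSet_Ioi).2 (Eventually.of_forall hptw)
    refine ⟨hint, ?_⟩
    have h3 : (∫ y in Ioi x, ‖Dker k (y - x) * W y * v y‖)
        ≤ ∫ y in Ioi x, g y * (c * hfun y ^ n / n !) :=
      setIntegral_mono_on hint.norm hmaj measurableSet_Ioi hptw
    have h4 : (fun y => g y * (c * hfun y ^ n / n !)) = fun y => (c / n !) * (g y * hfun y ^ n) := by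
      funext y; ring
    have h5 : (∫ y in Ioi x, g y * (c * hfun y ^ n / n !))
        = (c / n !) * ∫ y in Ioi x, g y * hfun y ^ n := by
      rw [h4, integral_const_mul]
    have h6 := tail_key hg hg0 hgm n x
    have h7 : (c / n !) * (∫ y in Ioi x, g y * hfun y ^ n)
        ≤ (c / n !) * (hfun x ^ (n+1) / ((n:ℝ)+1)) := by
      refine mul_le_mul_of_nonneg_left h6 (by positivity)
    have h8 : (c / n !) * (hfun x ^ (n+1) / ((n:ℝ)+1)) = c * hfun x ^ (n+1) / (n+1)! := by
      have hf2 : (((n+1)! : ℕ) : ℝ) = ((n:ℝ)+1) * (n ! : ℝ) := by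
        rw [Nat.factorial_succ]; push_cast; ring
      have h1 : ((n:ℝ)+1) ≠ 0 := by positivity
      have h2 : ((n ! : ℕ) : ℝ) ≠ 0 := ne_of_gt hfac
      rw [hf2]
      rw [div_mul_div_comm c ((n ! : ℕ):ℝ) (hfun x ^ (n+1)) ((n:ℝ)+1),
        mul_comm ((n ! : ℕ):ℝ) ((n:ℝ)+1)]
    calc (∫ y in Ioi x, ‖Dker k (y - x) * W y * v y‖)
        ≤ (c / n !) * ∫ y in Ioi x, g y * hfun y ^ n := by rw [← h5]; exact h3
      _ ≤ (c / n !) * (hfun x ^ (n+1) / ((n:ℝ)+1)) := h7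
      _ = c * hfun x ^ (n+1) / (n+1)! := h8
  -- measurability of the integral operator
  have meas_int : ∀ v : ℝ → ℂ, Measurable v →
      Measurable (fun x => ∫ y in Ioi x, Dker k (y - x) * W y * v y) := by
    intro v hv
    have hF : Measurable (fun p : ℝ × ℝ =>
        if p.1 < p.2 then Dker k (p.2 - p.1) * W p.2 * v p.2 else 0) := by
      refine Measurable.ite (measurableSet_lt measurable_fst measurable_snd) ?_ measurable_const
      exact (((dker_cont k hk0).measurable.comp (measurable_snd.sub measurable_fst)).mul
        (hWm.comp measurable_snd)).mul (hv.comp measurable_snd)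
    have h1 := hF.stronglyMeasurable.integral_prod_right' (ν := volume)
    have h2 : (fun x => ∫ y in Ioi x, Dker k (y - x) * W y * v y)
        = fun x => ∫ y, if x < y then Dker k (y - x) * W y * v y else 0 := by
      funext x
      rw [← integral_indicator measurableSet_Ioi]
      refine integral_congr_ae (Eventually.of_forall fun y => ?_)
      simp only [indicator_apply, mem_Ioi]
    rw [h2]
    exact h1.measurable
  -- the iterates
  let u : ℕ → ℝ → ℂ := fun n => n.rec (fun _ => (1:ℂ))
    (fun _ prev x => ∫ y in Ioi x, Dker k (y - x) * W y * prev y)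
  have u_zero : ∀ x, u 0 x = 1 := fun _ => rfl
  have u_succ : ∀ n x, u (n+1) x = ∫ y in Ioi x, Dker k (y - x) * W y * u n y := fun _ _ => rfl
  have u_prop : ∀ n : ℕ, Measurable (u n) ∧ ∀ x, ‖u n x‖ ≤ hfun x ^ n / n ! := by
    intro n
    induction n with
    | zero =>
      refine ⟨measurable_const, fun x => ?_⟩
      simp [u_zero]
    | succ n ih =>
      have hb : ∀ y, ‖u n y‖ ≤ 1 * hfun y ^ n / n ! := by
        intro y; simpa using ih.2 y
      constructor
      · exact meas_int (u n) ih.1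
      · intro x
        rw [u_succ]
        refine (norm_integral_le_integral_norm _).trans ?_
        have := (step (u n) ih.1 1 zero_le_one n hb x).2
        simpa using this
  -- summability and definition of m
  have u_bound : ∀ n x, ‖u n x‖ ≤ A ^ n / n ! := by
    intro n x
    refine ((u_prop n).2 x).trans ?_
    have h1 : hfun x ^ n ≤ A ^ n := pow_le_pow_left₀ (hh0 x) (hhA x) n
    have h2 : (0:ℝ) < n ! := by exact_mod_cast Nat.factorial_pos n
    gcongr
  have summ : ∀ x, Summable (fun n => u n x) := by
    intro x
    exact Summable.of_norm_bounded (Real.summable_pow_div_factorial A) (fun n => u_bound n x)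
  set m : ℝ → ℂ := fun x => ∑' n, u n x with hmdef
  have msum : ∀ x, HasSum (fun n => u n x) (m x) := fun x => (summ x).hasSum
  -- measurability of m
  have hmmeas : Measurable m := by
    refine measurable_of_tendsto_metrizable
      (f := fun N x => ∑ i ∈ Finset.range N, u i x) (fun N => ?_) ?_
    · exact Finset.measurable_sum _ (fun i _ => (u_prop i).1)
    · rw [tendsto_pi_nhds]
      intro x
      exact (msum x).tendsto_sum_nat
  -- norm bounds for m
  have hnorm_summ : ∀ x, Summable (fun n => hfun x ^ n / (n ! : ℝ)) :=
    fun x => Real.summable_pow_div_factorial (hfun x)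
  have hm_le_exp : ∀ x, ‖m x‖ ≤ Real.exp (hfun x) := by
    intro x
    rw [real_exp_tsum]
    refine (norm_tsum_le_tsum_norm ?_).trans ?_
    · exact Summable.of_nonneg_of_le (fun n => norm_nonneg _) (fun n => (u_prop n).2 x)
        (hnorm_summ x)
    · exact (Summable.of_nonneg_of_le (fun n => norm_nonneg _) (fun n => (u_prop n).2 x)
          (hnorm_summ x)).tsum_le_tsum (fun n => (u_prop n).2 x) (hnorm_summ x)
  have hshift : ∀ x, m x - 1 = ∑' n, u (n+1) x := by
    intro x
    have h1 : Summable (fun n => u (n+1) x) := (summable_nat_add_iff 1).2 (summ x)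
    have h2 := (summ x).tsum_eq_zero_add
    rw [u_zero] at h2
    rw [hmdef]
    simp only []
    rw [h2]
    ring
  have hexp_shift : ∀ x, (∑' n : ℕ, hfun x ^ (n+1) / ((n+1)! : ℝ)) = Real.exp (hfun x) - 1 := by
    intro x
    have h2 := (hnorm_summ x).tsum_eq_zero_add
    rw [← real_exp_tsum] at h2
    simp only [pow_zero, Nat.factorial_zero, Nat.cast_one, div_one] at h2
    linarith
  have hsumm_shift : ∀ x, Summable (fun n : ℕ => hfun x ^ (n+1) / ((n+1)! : ℝ)) :=
    fun x => (summable_nat_add_iff 1).2 (hnorm_summ x)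
  have hm_sub_one : ∀ x, ‖m x - 1‖ ≤ Real.exp (hfun x) - 1 := by
    intro x
    rw [hshift x, ← hexp_shift x]
    have hsn : Summable fun n : ℕ => ‖u (n+1) x‖ :=
      Summable.of_nonneg_of_le (fun n => norm_nonneg _) (fun n => (u_prop (n+1)).2 x)
        (hsumm_shift x)
    refine (norm_tsum_le_tsum_norm hsn).trans ?_
    exact hsn.tsum_le_tsum (fun n => (u_prop (n+1)).2 x) (hsumm_shift x)
  -- the integral equation
  have hsolves : ∀ x, m x = 1 + ∫ y in Ioi x, Dker k (y - x) * W y * m y := by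
    intro x
    have hFint : ∀ n : ℕ, Integrable (fun y => Dker k (y - x) * W y * u n y)
        (volume.restrict (Ioi x)) := by
      intro n
      exact (step (u n) (u_prop n).1 1 zero_le_one n
        (fun y => by simpa using (u_prop n).2 y) x).1
    have hFsum : Summable (fun n : ℕ => ∫ y in Ioi x, ‖Dker k (y - x) * W y * u n y‖) := by
      refine Summable.of_nonneg_of_le
        (fun n => integral_nonneg fun y => norm_nonneg _) (fun n => ?_)
        ((Real.summable_pow_div_factorial A).mul_left A)
      have h1 := (step (u n) (u_prop n).1 1 zero_le_one n
        (fun y => by simpa using (u_prop n).2 y) x).2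
      refine h1.trans ?_
      have h2 : hfun x ^ (n+1) ≤ A ^ (n+1) := pow_le_pow_left₀ (hh0 x) (hhA x) (n+1)
      have h3 : (n ! : ℝ) ≤ ((n+1)! : ℝ) := by
        exact_mod_cast Nat.factorial_le (Nat.le_succ n)
      have h4 : (0:ℝ) < (n ! : ℝ) := by exact_mod_cast Nat.factorial_pos n
      have h5 : (0:ℝ) < ((n+1)! : ℝ) := by exact_mod_cast Nat.factorial_pos (n+1)
      calc 1 * hfun x ^ (n+1) / ((n+1)! : ℝ) = hfun x ^ (n+1) / ((n+1)! : ℝ) := by ring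
        _ ≤ A ^ (n+1) / ((n+1)! : ℝ) := by gcongr
        _ = A * A ^ n / ((n+1)! : ℝ) := by ring
        _ ≤ A * A ^ n / (n ! : ℝ) := by gcongr
        _ = A * (A ^ n / (n ! : ℝ)) := by ring
    have hswap := integral_tsum_of_summable_integral_norm hFint hFsum
    have hlhs : (∑' n : ℕ, ∫ y in Ioi x, Dker k (y - x) * W y * u n y) = m x - 1 := by
      rw [hshift x]
    have hrhs : (∫ y in Ioi x, (∑' n : ℕ, Dker k (y - x) * W y * u n y))
        = ∫ y in Ioi x, Dker k (y - x) * W y * m y := by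
      refine integral_congr_ae (Eventually.of_forall fun y => ?_)
      exact tsum_mul_left
    rw [hrhs] at hswap
    rw [hlhs] at hswap
    rw [← hswap]
    ring
  have hmbound : ∀ y, ‖m y‖ ≤ Real.exp A :=
    fun y => (hm_le_exp y).trans (Real.exp_le_exp.2 (hhA y))
  -- uniqueness
  have huniq : ∀ m' : ℝ → ℂ, Measurable m' → (∃ C, ∀ x, ‖m' x‖ ≤ C) →
      (∀ x, m' x = 1 + ∫ y in Ioi x, Dker k (y - x) * W y * m' y) → m' = m := by
    rintro m' hm'meas ⟨C', hC'⟩ hm'eq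
    have hC'0 : 0 ≤ C' := (norm_nonneg _).trans (hC' 0)
    set d : ℝ → ℂ := fun y => m' y - m y with hddef
    have hdmeas : Measurable d := hm'meas.sub hmmeas
    set C : ℝ := C' + Real.exp A with hCdef
    have hC0 : 0 ≤ C := by positivity
    have hd_bound0 : ∀ y, ‖d y‖ ≤ C := by
      intro y
      refine (norm_sub_le _ _).trans ?_
      exact add_le_add (hC' y) (hmbound y)
    have hm'int : ∀ x, IntegrableOn (fun y => Dker k (y - x) * W y * m' y) (Ioi x) :=
      fun x => (step m' hm'meas C' hC'0 0 (fun y => by simpa using hC' y) x).1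
    have hmint : ∀ x, IntegrableOn (fun y => Dker k (y - x) * W y * m y) (Ioi x) :=
      fun x => (step m hmmeas (Real.exp A) (Real.exp_pos A).le 0
        (fun y => by simpa using hmbound y) x).1
    have hd_eq : ∀ x, d x = ∫ y in Ioi x, Dker k (y - x) * W y * d y := by
      intro x
      have h3 : d x = (∫ y in Ioi x, Dker k (y - x) * W y * m' y)
          - ∫ y in Ioi x, Dker k (y - x) * W y * m y := by
        rw [hddef]
        simp only []
        rw [hm'eq x, hsolves x]
        ring
      rw [h3, ← integral_sub (hm'int x) (hmint x)]
      refine integral_congr_ae (Eventually.of_forall fun y => ?_)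
      simp only [hddef]
      ring
    have hd_ind : ∀ n : ℕ, ∀ x, ‖d x‖ ≤ C * hfun x ^ n / n ! := by
      intro n
      induction n with
      | zero => intro x; simpa using hd_bound0 x
      | succ n ih =>
        intro x
        rw [hd_eq x]
        refine (norm_integral_le_integral_norm _).trans ?_
        exact (step d hdmeas C hC0 n ih x).2
    have hd_zero : ∀ x, d x = 0 := by
      intro x
      have hb : ∀ n : ℕ, ‖d x‖ ≤ C * (A ^ n / n !) := by
        intro n
        refine (hd_ind n x).trans ?_
        have h1 : hfun x ^ n ≤ A ^ n := pow_le_pow_left₀ (hh0 x) (hhA x) n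
        have h2 : (0:ℝ) < (n ! : ℝ) := by exact_mod_cast Nat.factorial_pos n
        calc C * hfun x ^ n / (n ! : ℝ) ≤ C * A ^ n / (n ! : ℝ) := by gcongr
          _ = C * (A ^ n / (n ! : ℝ)) := by ring
      have ht : Tendsto (fun n : ℕ => C * (A ^ n / n !)) atTop (𝓝 (C * 0)) :=
        ((Real.summable_pow_div_factorial A).tendsto_atTop_zero).const_mul C
      rw [mul_zero] at ht
      have h0 : ‖d x‖ ≤ 0 := ge_of_tendsto ht (Eventually.of_forall hb)
      exact norm_le_zero_iff.1 h0
    funext x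
    have := hd_zero x
    simp only [hddef] at this
    exact sub_eq_zero.1 this
  refine ⟨m, hmmeas, ⟨Real.exp A, hmbound⟩, hsolves, huniq, ?_, ?_⟩
  · intro x
    have hfx : hfun x = ‖k‖⁻¹ * ∫ y in Ioi x, ‖W y‖ := by
      rw [hhdef]
      exact integral_const_mul _ _
    rw [← hfx]
    exact hm_sub_one x
  · intro x
    have hAx : A = (∫ y, ‖W y‖) / ‖k‖ := by
      rw [hAdef]
      rw [integral_const_mul]
      rw [inv_mul_eq_div]
    rw [← hAx]
    exact hmbound x

open MeasureTheory in
/-- For `V ∈ L¹(ℝ)` and `Im k ≥ 0`, `k ≠ 0`, the modified Lippmann–Schwinger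
equation `m(x) = 1 + ∫ₓ^∞ D_k(y−x) V(y) m(y) dy` has a unique bounded solution `m = m₊(k;·)`,
satisfying `|m₊(k;x) − 1| ≤ exp(|k|⁻¹ ∫ₓ^∞ |V|) − 1` and `|m₊(k;x)| ≤ exp(‖V‖₁/|k|)`. -/
theorem stmt14 (V : ℝ → ℂ) (hV : Integrable V)
    (k : ℂ) (hk : 0 ≤ k.im) (hk0 : k ≠ 0) :
    ∃ m : ℝ → ℂ, Measurable m ∧ (∃ C, ∀ x, ‖m x‖ ≤ C) ∧
      (∀ x, m x = 1 + ∫ y in Set.Ioi x, Dker k (y - x) * V y * m y) ∧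
      (∀ m' : ℝ → ℂ, Measurable m' → (∃ C, ∀ x, ‖m' x‖ ≤ C) →
        (∀ x, m' x = 1 + ∫ y in Set.Ioi x, Dker k (y - x) * V y * m' y) → m' = m) ∧
      (∀ x, ‖m x - 1‖ ≤ Real.exp (‖k‖⁻¹ * ∫ y in Set.Ioi x, ‖V y‖) - 1) ∧
      (∀ x, ‖m x‖ ≤ Real.exp ((∫ y, ‖V y‖) / ‖k‖)) := by
  set W : ℝ → ℂ := hV.1.mk V with hWdef
  have hWsm : StronglyMeasurable W := hV.1.stronglyMeasurable_mk
  have hVW : V =ᵐ[volume] W := hV.1.ae_eq_mk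
  have hWm : Measurable W := hWsm.measurable
  have hWi : Integrable W := hV.congr hVW
  have hint_eq : ∀ (u : ℝ → ℂ) (x : ℝ),
      (∫ y in Set.Ioi x, Dker k (y - x) * V y * u y)
        = ∫ y in Set.Ioi x, Dker k (y - x) * W y * u y := fun u x =>
    integral_congr_ae (ae_restrict_of_ae (hVW.mono fun y hy => by simp only [hy]))
  have hnorm_eq : ∀ x : ℝ, (∫ y in Set.Ioi x, ‖V y‖) = ∫ y in Set.Ioi x, ‖W y‖ := fun x =>
    integral_congr_ae (ae_restrict_of_ae (hVW.mono fun y hy => by simp only [hy]))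
  have htot_eq : (∫ y, ‖V y‖) = ∫ y, ‖W y‖ :=
    integral_congr_ae (hVW.mono fun y hy => by simp only [hy])
  obtain ⟨m, h1, h2, h3, h4, h5, h6⟩ := main_aux k hk hk0 W hWi hWm
  refine ⟨m, h1, h2, fun x => by rw [hint_eq m x]; exact h3 x,
    fun m' hm1 hm2 hm3 => h4 m' hm1 hm2 (fun x => by rw [← hint_eq m' x]; exact hm3 x),
    fun x => by rw [hnorm_eq x]; exact h5 x,
    fun x => by rw [htot_eq]; exact h6 x⟩
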